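/- The operators U_k satisfy the nilCoxeter relations: U_k ∘ U_k = 0 for all 1 ≤ k ≤ n−1; U_k ∘ U_{k+1} ∘ U_k = U_{k+1} ∘ U_k ∘ U_{k+1} for all 1 ≤ k ≤ n−2; and U_k ∘ U_l = U_l ∘ U_k whenever |k − l| ≥ 2. -/

import Mathlib

open scoped Classical

noncomputable section

/-- The Coxeter length of a permutation of `Fin n`: its number of inversions. -/
def permLen {n : ℕ} (w : Equiv.Perm (Fin n)) : ℕ :=
  (Finset.univ.filter fun p : Fin n × Fin n => p.1 < p.2 ∧ w p.2 < w p.1).card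

/-- The partial sums (block offsets) of a composition `μ`. -/
def off (μ : ℕ → ℕ) (t : ℕ) : ℕ := ∑ s ∈ Finset.range t, μ s

/-- `p` and `q` lie in the same (consecutive) block of the composition
`(μ 0, …, μ (r-1))`. -/
def sameBlock (r : ℕ) (μ : ℕ → ℕ) (p q : ℕ) : Prop :=
  ∃ t < r, off μ t ≤ p ∧ p < off μ (t + 1) ∧ off μ t ≤ q ∧ q < off μ (t + 1)

/-- The set `D_μ` of minimal-length representatives of the left cosets `u • S_μ`:
permutations increasing on each block of `μ`. -/
def Dmu (n r : ℕ) (μ : ℕ → ℕ) : Set (Equiv.Perm (Fin n)) :=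
  {u | ∀ p q : Fin n, p < q → sameBlock r μ (p : ℕ) (q : ℕ) → u p < u q}

/-- The adjacent transposition `s_k = (k, k+1)` (0-indexed), as a permutation
of `Fin n` (junk value `1` if out of range). -/
def adjSwap (n k : ℕ) : Equiv.Perm (Fin n) :=
  if h : k + 1 < n then Equiv.swap ⟨k, Nat.lt_of_succ_lt h⟩ ⟨k + 1, h⟩ else 1

/-- The index type for the basis `{e_u : u ∈ D_μ}` of the vector space `V`. -/
abbrev DmuSub (n r : ℕ) (μ : ℕ → ℕ) : Type := {u : Equiv.Perm (Fin n) // u ∈ Dmu n r μ}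

/-- The defining property of the family of `K`-linear operators
`U_k : V → V` on `V = (DmuSub n r μ → K)`:
`U_k (e_u) = e_{s_k u}` if `ℓ(s_k u) = ℓ(u) + 1` and `s_k u ∈ D_μ`, and
`U_k (e_u) = 0` otherwise (here `e_u = Pi.single u 1`). -/
def IsUFamily (K : Type*) [Field K] (n r : ℕ) (μ : ℕ → ℕ)
    (U : ℕ → ((DmuSub n r μ → K) →ₗ[K] (DmuSub n r μ → K))) : Prop :=
  ∀ k, k + 1 < n → ∀ u : DmuSub n r μ,
    U k (Pi.single u (1 : K)) =
      if h : permLen (adjSwap n k * u.1) = permLen u.1 + 1 ∧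
          adjSwap n k * u.1 ∈ Dmu n r μ
      then Pi.single (⟨adjSwap n k * u.1, h.2⟩ : DmuSub n r μ) (1 : K) else 0

lemma adjSwap_def {n k : ℕ} (h : k + 1 < n) :
    adjSwap n k = Equiv.swap ⟨k, Nat.lt_of_succ_lt h⟩ ⟨k + 1, h⟩ := dif_pos h

lemma adjSwap_sq (n k : ℕ) : adjSwap n k * adjSwap n k = 1 := by
  unfold adjSwap; split_ifs with h
  · exact Equiv.swap_mul_self _ _
  · exact one_mul 1

lemma adjSwap_mul_adjSwap_mul {n k : ℕ} (w : Equiv.Perm (Fin n)) :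
    adjSwap n k * (adjSwap n k * w) = w := by
  rw [← mul_assoc, adjSwap_sq, one_mul]

lemma adjSwap_inv (n k : ℕ) : (adjSwap n k)⁻¹ = adjSwap n k := by
  unfold adjSwap; split_ifs with h
  · exact Equiv.swap_inv _ _
  · exact inv_one

lemma inv_adjSwap_mul {n k : ℕ} (w : Equiv.Perm (Fin n)) (x : Fin n) :
    (adjSwap n k * w)⁻¹ x = w⁻¹ (adjSwap n k x) := by
  rw [mul_inv_rev, Equiv.Perm.mul_apply, adjSwap_inv]

set_option maxRecDepth 20000 in
lemma swap_lt {n k : ℕ} (h : k + 1 < n) (x y : Fin n) :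
    Equiv.swap (⟨k, Nat.lt_of_succ_lt h⟩ : Fin n) ⟨k + 1, h⟩ x <
      Equiv.swap (⟨k, Nat.lt_of_succ_lt h⟩ : Fin n) ⟨k + 1, h⟩ y ↔
    ((x < y ∧ ¬(x = ⟨k, Nat.lt_of_succ_lt h⟩ ∧ y = ⟨k + 1, h⟩)) ∨
      (x = ⟨k + 1, h⟩ ∧ y = ⟨k, Nat.lt_of_succ_lt h⟩)) := by
  simp only [Equiv.swap_apply_def]
  split_ifs <;>
    simp_all only [Fin.lt_def, Fin.ext_iff, Fin.val_mk, not_and, not_true, not_false_iff,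
      true_and, and_true, false_and, and_false, true_implies, false_implies, or_false,
      false_or, iff_true, iff_false, not_lt, true_or, or_true, not_not] <;>
    omega

lemma reversal {n k : ℕ} (h : k + 1 < n) {x y : Fin n} (hxy : x < y)
    (hrev : ¬ Equiv.swap (⟨k, Nat.lt_of_succ_lt h⟩ : Fin n) ⟨k + 1, h⟩ x <
      Equiv.swap (⟨k, Nat.lt_of_succ_lt h⟩ : Fin n) ⟨k + 1, h⟩ y) :
    x = ⟨k, Nat.lt_of_succ_lt h⟩ ∧ y = ⟨k + 1, h⟩ := by
  by_contra hc
  exact hrev ((swap_lt h x y).2 (Or.inl ⟨hxy, hc⟩))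

lemma swap_lt_of_lt {n k : ℕ} (h : k + 1 < n) {x y : Fin n} (hxy : x < y)
    (hne : ¬(x = ⟨k, Nat.lt_of_succ_lt h⟩ ∧ y = ⟨k + 1, h⟩)) :
    Equiv.swap (⟨k, Nat.lt_of_succ_lt h⟩ : Fin n) ⟨k + 1, h⟩ x <
      Equiv.swap (⟨k, Nat.lt_of_succ_lt h⟩ : Fin n) ⟨k + 1, h⟩ y :=
  (swap_lt h x y).2 (Or.inl ⟨hxy, hne⟩)

lemma permLen_inc {n k : ℕ} (h : k + 1 < n) (w : Equiv.Perm (Fin n))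
    (hab : w⁻¹ ⟨k, Nat.lt_of_succ_lt h⟩ < w⁻¹ ⟨k + 1, h⟩) :
    permLen (adjSwap n k * w) = permLen w + 1 := by
  have hT : (Finset.univ.filter fun p : Fin n × Fin n =>
      p.1 < p.2 ∧ (adjSwap n k * w) p.2 < (adjSwap n k * w) p.1) =
      insert (w⁻¹ ⟨k, Nat.lt_of_succ_lt h⟩, w⁻¹ ⟨k + 1, h⟩)
        (Finset.univ.filter fun p : Fin n × Fin n =>
          p.1 < p.2 ∧ w p.2 < w p.1) := by
    ext ⟨p, q⟩
    simp only [Finset.mem_insert, Finset.mem_filter, Finset.mem_univ, true_and,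
      adjSwap_def h, Equiv.Perm.mul_apply, Prod.mk.injEq]
    rw [swap_lt h]
    constructor
    · rintro ⟨hpq, (⟨hlt, hne⟩ | ⟨h1, h2⟩)⟩
      · exact Or.inr ⟨hpq, hlt⟩
      · exact Or.inl ⟨Equiv.Perm.eq_inv_iff_eq.2 h2, Equiv.Perm.eq_inv_iff_eq.2 h1⟩
    · rintro (⟨hp, hq⟩ | ⟨hpq, hlt⟩)
      · subst hp; subst hq
        exact ⟨hab, Or.inr ⟨w.apply_symm_apply _, w.apply_symm_apply _⟩⟩
      · refine ⟨hpq, Or.inl ⟨hlt, ?_⟩⟩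
        rintro ⟨h1, h2⟩
        have hqa : q = w⁻¹ ⟨k, Nat.lt_of_succ_lt h⟩ := Equiv.Perm.eq_inv_iff_eq.2 h1
        have hpb : p = w⁻¹ ⟨k + 1, h⟩ := Equiv.Perm.eq_inv_iff_eq.2 h2
        subst hqa; subst hpb
        exact absurd hpq (not_lt.2 hab.le)
  have hnm : (w⁻¹ (⟨k, Nat.lt_of_succ_lt h⟩ : Fin n), w⁻¹ (⟨k + 1, h⟩ : Fin n)) ∉
      (Finset.univ.filter fun p : Fin n × Fin n => p.1 < p.2 ∧ w p.2 < w p.1) := by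
    simp only [Finset.mem_filter, Finset.mem_univ, true_and, Equiv.Perm.inv_def, Equiv.apply_symm_apply]
    rintro ⟨-, hlt⟩
    simp [Fin.lt_def] at hlt
  unfold permLen
  rw [hT, Finset.card_insert_of_notMem hnm]

lemma permLen_iff {n k : ℕ} (h : k + 1 < n) (w : Equiv.Perm (Fin n)) :
    permLen (adjSwap n k * w) = permLen w + 1 ↔
      w⁻¹ ⟨k, Nat.lt_of_succ_lt h⟩ < w⁻¹ ⟨k + 1, h⟩ := by
  constructor
  · intro hl
    by_contra hnot
    have hne : w⁻¹ (⟨k, Nat.lt_of_succ_lt h⟩ : Fin n) ≠ w⁻¹ ⟨k + 1, h⟩ := by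
      intro hc
      have := w⁻¹.injective hc
      simp [Fin.ext_iff] at this
    have hba : w⁻¹ (⟨k + 1, h⟩ : Fin n) < w⁻¹ ⟨k, Nat.lt_of_succ_lt h⟩ :=
      (hne.lt_or_gt).resolve_left hnot
    have hcond : (adjSwap n k * w)⁻¹ (⟨k, Nat.lt_of_succ_lt h⟩ : Fin n) <
        (adjSwap n k * w)⁻¹ ⟨k + 1, h⟩ := by
      rw [inv_adjSwap_mul, inv_adjSwap_mul, adjSwap_def h, Equiv.swap_apply_left,
        Equiv.swap_apply_right]
      exact hba
    have h2 := permLen_inc h (adjSwap n k * w) hcond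
    rw [adjSwap_mul_adjSwap_mul] at h2
    omega
  · exact permLen_inc h w

lemma fin_mk_ne {n a b : ℕ} (ha : a < n) (hb : b < n) (h : a ≠ b) :
    (⟨a, ha⟩ : Fin n) ≠ ⟨b, hb⟩ := by
  intro hc; exact h (Fin.mk.inj hc)

lemma swap_braid {α : Type*} [DecidableEq α] (a b c : α) (hab : a ≠ b) (hbc : b ≠ c)
    (hac : a ≠ c) :
    Equiv.swap a b * Equiv.swap b c * Equiv.swap a b =
      Equiv.swap b c * Equiv.swap a b * Equiv.swap b c := by
  trans Equiv.swap c a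
  · rw [Equiv.swap_comm a b, Equiv.swap_comm b c,
      Equiv.swap_mul_swap_mul_swap (Ne.symm hbc) (Ne.symm hac)]
    exact Equiv.swap_comm a c
  · exact (Equiv.swap_mul_swap_mul_swap hab hac).symm

lemma adjSwap_braid {n k : ℕ} (h : k + 2 < n) :
    adjSwap n k * adjSwap n (k + 1) * adjSwap n k =
      adjSwap n (k + 1) * adjSwap n k * adjSwap n (k + 1) := by
  have h1 : k + 1 < n := Nat.lt_of_succ_lt h
  have h2 : k + 1 + 1 < n := h
  rw [adjSwap_def h1, adjSwap_def h2]
  exact swap_braid (⟨k, Nat.lt_of_succ_lt h1⟩ : Fin n) ⟨k + 1, h1⟩ ⟨k + 1 + 1, h2⟩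
    ((by simp only [ne_eq, Fin.mk.injEq]; omega)) ((by simp only [ne_eq, Fin.mk.injEq]; omega))
    ((by simp only [ne_eq, Fin.mk.injEq]; omega))

lemma adjSwap_comm' {n k l : ℕ} (hkl : k + 2 ≤ l) :
    adjSwap n k * adjSwap n l = adjSwap n l * adjSwap n k := by
  by_cases h1 : k + 1 < n
  · by_cases h2 : l + 1 < n
    · rw [adjSwap_def h1, adjSwap_def h2]
      refine (Equiv.Perm.Disjoint.commute ?_).eq
      intro x
      by_cases hx1 : x = (⟨k, Nat.lt_of_succ_lt h1⟩ : Fin n)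
      · subst hx1
        right
        exact Equiv.swap_apply_of_ne_of_ne ((by simp only [ne_eq, Fin.mk.injEq]; omega))
          ((by simp only [ne_eq, Fin.mk.injEq]; omega))
      · by_cases hx2 : x = (⟨k + 1, h1⟩ : Fin n)
        · subst hx2
          right
          exact Equiv.swap_apply_of_ne_of_ne ((by simp only [ne_eq, Fin.mk.injEq]; omega))
            ((by simp only [ne_eq, Fin.mk.injEq]; omega))
        · left
          exact Equiv.swap_apply_of_ne_of_ne hx1 hx2
    · rw [show adjSwap n l = 1 from dif_neg h2, one_mul, mul_one]
  · rw [show adjSwap n k = 1 from dif_neg h1, one_mul, mul_one]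

lemma mem_Dmu_step {n r : ℕ} {μ : ℕ → ℕ} {k : ℕ} (hk : k + 1 < n)
    {w : Equiv.Perm (Fin n)} (g : Equiv.Perm (Fin n)) (hw : w ∈ Dmu n r μ)
    (hgw : g * (adjSwap n k * w) ∈ Dmu n r μ)
    (hg : g ⟨k, Nat.lt_of_succ_lt hk⟩ < g ⟨k + 1, hk⟩) :
    adjSwap n k * w ∈ Dmu n r μ := by
  intro p q hpq hb
  by_contra hno
  have hupq : w p < w q := hw p q hpq hb
  rw [Equiv.Perm.mul_apply, Equiv.Perm.mul_apply, adjSwap_def hk] at hno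
  obtain ⟨h1, h2⟩ := reversal hk hupq hno
  have hcon : (g * (adjSwap n k * w)) p < (g * (adjSwap n k * w)) q := hgw p q hpq hb
  rw [Equiv.Perm.mul_apply, Equiv.Perm.mul_apply, Equiv.Perm.mul_apply,
    Equiv.Perm.mul_apply, adjSwap_def hk, h1, h2, Equiv.swap_apply_left,
    Equiv.swap_apply_right] at hcon
  exact absurd hcon (not_lt.2 hg.le)

lemma Uapp {K : Type*} [Field K] {n r : ℕ} {μ : ℕ → ℕ}
    {U : ℕ → ((DmuSub n r μ → K) →ₗ[K] (DmuSub n r μ → K))} (hU : IsUFamily K n r μ U)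
    {k : ℕ} (hk : k + 1 < n) (u : DmuSub n r μ) (c : K) :
    U k (Pi.single u c) =
      if h : permLen (adjSwap n k * u.1) = permLen u.1 + 1 ∧ adjSwap n k * u.1 ∈ Dmu n r μ
      then Pi.single (⟨adjSwap n k * u.1, h.2⟩ : DmuSub n r μ) c else 0 := by
  have hsm : ∀ x : DmuSub n r μ, (c • (Pi.single x (1 : K) : DmuSub n r μ → K)) =
      Pi.single x c := by
    intro x; funext v
    by_cases h : v = x <;> simp [Pi.single_apply, h]
  rw [← hsm u, map_smul, hU k hk u]
  split_ifs with h
  · exact hsm _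
  · exact smul_zero c

lemma Uapp2 {K : Type*} [Field K] {n r : ℕ} {μ : ℕ → ℕ}
    {U : ℕ → ((DmuSub n r μ → K) →ₗ[K] (DmuSub n r μ → K))} (hU : IsUFamily K n r μ U)
    {k l : ℕ} (hk : k + 1 < n) (hl : l + 1 < n) (u : DmuSub n r μ) (c : K) :
    U l (U k (Pi.single u c)) =
      if h : (permLen (adjSwap n k * u.1) = permLen u.1 + 1 ∧ adjSwap n k * u.1 ∈ Dmu n r μ) ∧
             (permLen (adjSwap n l * (adjSwap n k * u.1)) = permLen (adjSwap n k * u.1) + 1 ∧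
               adjSwap n l * (adjSwap n k * u.1) ∈ Dmu n r μ)
      then Pi.single (⟨adjSwap n l * (adjSwap n k * u.1), h.2.2⟩ : DmuSub n r μ) c else 0 := by
  rw [Uapp hU hk u c]
  by_cases h1 : permLen (adjSwap n k * u.1) = permLen u.1 + 1 ∧ adjSwap n k * u.1 ∈ Dmu n r μ
  · rw [dif_pos h1, Uapp hU hl ⟨adjSwap n k * u.1, h1.2⟩ c]
    by_cases h2 : permLen (adjSwap n l * (adjSwap n k * u.1)) =
        permLen (adjSwap n k * u.1) + 1 ∧ adjSwap n l * (adjSwap n k * u.1) ∈ Dmu n r μ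
    · rw [dif_pos h2, dif_pos ⟨h1, h2⟩]
    · rw [dif_neg h2, dif_neg fun hc => h2 hc.2]
  · rw [dif_neg h1, map_zero, dif_neg fun hc => h1 hc.1]

lemma Uapp3 {K : Type*} [Field K] {n r : ℕ} {μ : ℕ → ℕ}
    {U : ℕ → ((DmuSub n r μ → K) →ₗ[K] (DmuSub n r μ → K))} (hU : IsUFamily K n r μ U)
    {k l m : ℕ} (hk : k + 1 < n) (hl : l + 1 < n) (hm : m + 1 < n) (u : DmuSub n r μ)
    (c : K) :
    U m (U l (U k (Pi.single u c))) =
      if h : (permLen (adjSwap n k * u.1) = permLen u.1 + 1 ∧ adjSwap n k * u.1 ∈ Dmu n r μ) ∧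
             (permLen (adjSwap n l * (adjSwap n k * u.1)) = permLen (adjSwap n k * u.1) + 1 ∧
               adjSwap n l * (adjSwap n k * u.1) ∈ Dmu n r μ) ∧
             (permLen (adjSwap n m * (adjSwap n l * (adjSwap n k * u.1))) =
                 permLen (adjSwap n l * (adjSwap n k * u.1)) + 1 ∧
               adjSwap n m * (adjSwap n l * (adjSwap n k * u.1)) ∈ Dmu n r μ)
      then Pi.single
        (⟨adjSwap n m * (adjSwap n l * (adjSwap n k * u.1)), h.2.2.2⟩ : DmuSub n r μ) c
      else 0 := by
  rw [Uapp2 hU hk hl u c]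
  by_cases h12 : (permLen (adjSwap n k * u.1) = permLen u.1 + 1 ∧
      adjSwap n k * u.1 ∈ Dmu n r μ) ∧
      (permLen (adjSwap n l * (adjSwap n k * u.1)) = permLen (adjSwap n k * u.1) + 1 ∧
        adjSwap n l * (adjSwap n k * u.1) ∈ Dmu n r μ)
  · rw [dif_pos h12, Uapp hU hm ⟨adjSwap n l * (adjSwap n k * u.1), h12.2.2⟩ c]
    by_cases h3 : permLen (adjSwap n m * (adjSwap n l * (adjSwap n k * u.1))) =
        permLen (adjSwap n l * (adjSwap n k * u.1)) + 1 ∧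
        adjSwap n m * (adjSwap n l * (adjSwap n k * u.1)) ∈ Dmu n r μ
    · rw [dif_pos h3, dif_pos ⟨h12.1, h12.2, h3⟩]
    · rw [dif_neg h3, dif_neg fun hc => h3 hc.2.2]
  · rw [dif_neg h12, map_zero, dif_neg fun hc => h12 ⟨hc.1, hc.2.1⟩]

lemma nil_aux {K : Type*} [Field K] {n r : ℕ} {μ : ℕ → ℕ}
    {U : ℕ → ((DmuSub n r μ → K) →ₗ[K] (DmuSub n r μ → K))} (hU : IsUFamily K n r μ U)
    {k : ℕ} (hk : k + 1 < n) : (U k).comp (U k) = 0 := by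
  refine LinearMap.pi_ext fun u c => ?_
  rw [LinearMap.comp_apply, LinearMap.zero_apply, Uapp2 hU hk hk u c, dif_neg]
  rintro ⟨⟨hl1, -⟩, ⟨hl2, -⟩⟩
  rw [adjSwap_mul_adjSwap_mul] at hl2
  omega

lemma comm_aux {K : Type*} [Field K] {n r : ℕ} {μ : ℕ → ℕ}
    {U : ℕ → ((DmuSub n r μ → K) →ₗ[K] (DmuSub n r μ → K))} (hU : IsUFamily K n r μ U)
    {k l : ℕ} (hk : k + 1 < n) (hl : l + 1 < n) (hkl : k + 2 ≤ l) :
    (U k).comp (U l) = (U l).comp (U k) := by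
  refine LinearMap.pi_ext fun u c => ?_
  rw [LinearMap.comp_apply, LinearMap.comp_apply, Uapp2 hU hl hk u c, Uapp2 hU hk hl u c]
  have hcsw : adjSwap n k * (adjSwap n l * u.1) = adjSwap n l * (adjSwap n k * u.1) := by
    rw [← mul_assoc, ← mul_assoc, adjSwap_comm' hkl]
  -- value facts
  have vtk : adjSwap n l (⟨k, Nat.lt_of_succ_lt hk⟩ : Fin n) = ⟨k, Nat.lt_of_succ_lt hk⟩ := by
    rw [adjSwap_def hl]
    exact Equiv.swap_apply_of_ne_of_ne (by simp only [ne_eq, Fin.mk.injEq]; omega)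
      (by simp only [ne_eq, Fin.mk.injEq]; omega)
  have vtk1 : adjSwap n l (⟨k + 1, hk⟩ : Fin n) = ⟨k + 1, hk⟩ := by
    rw [adjSwap_def hl]
    exact Equiv.swap_apply_of_ne_of_ne (by simp only [ne_eq, Fin.mk.injEq]; omega)
      (by simp only [ne_eq, Fin.mk.injEq]; omega)
  have vsl : adjSwap n k (⟨l, Nat.lt_of_succ_lt hl⟩ : Fin n) = ⟨l, Nat.lt_of_succ_lt hl⟩ := by
    rw [adjSwap_def hk]
    exact Equiv.swap_apply_of_ne_of_ne (by simp only [ne_eq, Fin.mk.injEq]; omega)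
      (by simp only [ne_eq, Fin.mk.injEq]; omega)
  have vsl1 : adjSwap n k (⟨l + 1, hl⟩ : Fin n) = ⟨l + 1, hl⟩ := by
    rw [adjSwap_def hk]
    exact Equiv.swap_apply_of_ne_of_ne (by simp only [ne_eq, Fin.mk.injEq]; omega)
      (by simp only [ne_eq, Fin.mk.injEq]; omega)
  -- length equivalences
  have EK : (permLen (adjSwap n k * (adjSwap n l * u.1)) =
      permLen (adjSwap n l * u.1) + 1) ↔
      (permLen (adjSwap n k * u.1) = permLen u.1 + 1) := by
    rw [permLen_iff hk (adjSwap n l * u.1), permLen_iff hk u.1]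
    simp only [inv_adjSwap_mul, vtk, vtk1]
  have EL : (permLen (adjSwap n l * (adjSwap n k * u.1)) =
      permLen (adjSwap n k * u.1) + 1) ↔
      (permLen (adjSwap n l * u.1) = permLen u.1 + 1) := by
    rw [permLen_iff hl (adjSwap n k * u.1), permLen_iff hl u.1]
    simp only [inv_adjSwap_mul, vsl, vsl1]
  -- Dmu facts, all from the master element
  have hgk : (adjSwap n l) ⟨k, Nat.lt_of_succ_lt hk⟩ < (adjSwap n l) ⟨k + 1, hk⟩ := by
    rw [vtk, vtk1]; exact Fin.mk_lt_mk.mpr (by omega)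
  have hgl : (adjSwap n k) ⟨l, Nat.lt_of_succ_lt hl⟩ < (adjSwap n k) ⟨l + 1, hl⟩ := by
    rw [vsl, vsl1]; exact Fin.mk_lt_mk.mpr (by omega)
  have dk : adjSwap n l * (adjSwap n k * u.1) ∈ Dmu n r μ →
      adjSwap n k * u.1 ∈ Dmu n r μ := fun hM =>
    mem_Dmu_step hk (adjSwap n l) u.2 hM hgk
  have dl : adjSwap n l * (adjSwap n k * u.1) ∈ Dmu n r μ →
      adjSwap n l * u.1 ∈ Dmu n r μ := fun hM =>
    mem_Dmu_step hl (adjSwap n k) u.2 (by rw [hcsw]; exact hM) hgl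
  by_cases hL : (permLen (adjSwap n l * u.1) = permLen u.1 + 1 ∧
      adjSwap n l * u.1 ∈ Dmu n r μ) ∧
      (permLen (adjSwap n k * (adjSwap n l * u.1)) = permLen (adjSwap n l * u.1) + 1 ∧
        adjSwap n k * (adjSwap n l * u.1) ∈ Dmu n r μ)
  · have hM : adjSwap n l * (adjSwap n k * u.1) ∈ Dmu n r μ := by
      rw [← hcsw]; exact hL.2.2
    have hR : (permLen (adjSwap n k * u.1) = permLen u.1 + 1 ∧
        adjSwap n k * u.1 ∈ Dmu n r μ) ∧
        (permLen (adjSwap n l * (adjSwap n k * u.1)) = permLen (adjSwap n k * u.1) + 1 ∧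
          adjSwap n l * (adjSwap n k * u.1) ∈ Dmu n r μ) :=
      ⟨⟨EK.1 hL.2.1, dk hM⟩, ⟨EL.2 hL.1.1, hM⟩⟩
    rw [dif_pos hL, dif_pos hR]
    have : (⟨adjSwap n k * (adjSwap n l * u.1), hL.2.2⟩ : DmuSub n r μ) =
        ⟨adjSwap n l * (adjSwap n k * u.1), hR.2.2⟩ := Subtype.ext hcsw
    rw [this]
  · rw [dif_neg hL, dif_neg]
    rintro ⟨⟨hR1, hR2⟩, ⟨hR3, hM⟩⟩
    exact hL ⟨⟨EL.1 hR3, dl hM⟩, ⟨EK.2 hR1, by rw [hcsw]; exact hM⟩⟩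

lemma braid_aux {K : Type*} [Field K] {n r : ℕ} {μ : ℕ → ℕ}
    {U : ℕ → ((DmuSub n r μ → K) →ₗ[K] (DmuSub n r μ → K))} (hU : IsUFamily K n r μ U)
    {k : ℕ} (h2 : k + 1 + 1 < n) :
    (U k).comp ((U (k + 1)).comp (U k)) = (U (k + 1)).comp ((U k).comp (U (k + 1))) := by
  have hk1 : k + 1 < n := Nat.lt_of_succ_lt h2
  refine LinearMap.pi_ext fun u c => ?_
  simp only [LinearMap.comp_apply]
  rw [Uapp3 hU hk1 h2 hk1 u c, Uapp3 hU h2 hk1 h2 u c]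
  have hbr : adjSwap n k * (adjSwap n (k + 1) * (adjSwap n k * u.1)) =
      adjSwap n (k + 1) * (adjSwap n k * (adjSwap n (k + 1) * u.1)) := by
    simp only [← mul_assoc]
    rw [adjSwap_braid h2]
  -- value facts
  have vs1 : adjSwap n k (⟨k, Nat.lt_of_succ_lt hk1⟩ : Fin n) = ⟨k + 1, hk1⟩ := by
    rw [adjSwap_def hk1]; exact Equiv.swap_apply_left _ _
  have vs2 : adjSwap n k (⟨k + 1, hk1⟩ : Fin n) = ⟨k, Nat.lt_of_succ_lt hk1⟩ := by
    rw [adjSwap_def hk1]; exact Equiv.swap_apply_right _ _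
  have vs3 : adjSwap n k (⟨k + 1 + 1, h2⟩ : Fin n) = ⟨k + 1 + 1, h2⟩ := by
    rw [adjSwap_def hk1]
    exact Equiv.swap_apply_of_ne_of_ne (by simp only [ne_eq, Fin.mk.injEq]; omega)
      (by simp only [ne_eq, Fin.mk.injEq]; omega)
  have vt1 : adjSwap n (k + 1) (⟨k, Nat.lt_of_succ_lt hk1⟩ : Fin n) =
      ⟨k, Nat.lt_of_succ_lt hk1⟩ := by
    rw [adjSwap_def h2]
    exact Equiv.swap_apply_of_ne_of_ne (by simp only [ne_eq, Fin.mk.injEq]; omega)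
      (by simp only [ne_eq, Fin.mk.injEq]; omega)
  have vt2 : adjSwap n (k + 1) (⟨k + 1, hk1⟩ : Fin n) = ⟨k + 1 + 1, h2⟩ := by
    rw [adjSwap_def h2]; exact Equiv.swap_apply_left _ _
  have vt3 : adjSwap n (k + 1) (⟨k + 1 + 1, h2⟩ : Fin n) = ⟨k + 1, hk1⟩ := by
    rw [adjSwap_def h2]; exact Equiv.swap_apply_right _ _
  -- length equivalences for the left chain (k, k+1, k)
  have LA1 : (permLen (adjSwap n k * u.1) = permLen u.1 + 1) ↔
      u.1⁻¹ ⟨k, Nat.lt_of_succ_lt hk1⟩ < u.1⁻¹ ⟨k + 1, hk1⟩ := permLen_iff hk1 u.1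
  have LA2 : (permLen (adjSwap n (k + 1) * (adjSwap n k * u.1)) =
      permLen (adjSwap n k * u.1) + 1) ↔
      u.1⁻¹ ⟨k, Nat.lt_of_succ_lt hk1⟩ < u.1⁻¹ ⟨k + 1 + 1, h2⟩ := by
    rw [permLen_iff h2 (adjSwap n k * u.1)]
    simp only [inv_adjSwap_mul, vs1, vs2, vs3]
  have LA3 : (permLen (adjSwap n k * (adjSwap n (k + 1) * (adjSwap n k * u.1))) =
      permLen (adjSwap n (k + 1) * (adjSwap n k * u.1)) + 1) ↔
      u.1⁻¹ ⟨k + 1, hk1⟩ < u.1⁻¹ ⟨k + 1 + 1, h2⟩ := by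
    rw [permLen_iff hk1 (adjSwap n (k + 1) * (adjSwap n k * u.1))]
    simp only [inv_adjSwap_mul, vt1, vt2, vt3, vs1, vs2, vs3]
  -- length equivalences for the right chain (k+1, k, k+1)
  have LB1 : (permLen (adjSwap n (k + 1) * u.1) = permLen u.1 + 1) ↔
      u.1⁻¹ ⟨k + 1, hk1⟩ < u.1⁻¹ ⟨k + 1 + 1, h2⟩ := permLen_iff h2 u.1
  have LB2 : (permLen (adjSwap n k * (adjSwap n (k + 1) * u.1)) =
      permLen (adjSwap n (k + 1) * u.1) + 1) ↔
      u.1⁻¹ ⟨k, Nat.lt_of_succ_lt hk1⟩ < u.1⁻¹ ⟨k + 1 + 1, h2⟩ := by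
    rw [permLen_iff hk1 (adjSwap n (k + 1) * u.1)]
    simp only [inv_adjSwap_mul, vt1, vt2, vt3]
  have LB3 : (permLen (adjSwap n (k + 1) * (adjSwap n k * (adjSwap n (k + 1) * u.1))) =
      permLen (adjSwap n k * (adjSwap n (k + 1) * u.1)) + 1) ↔
      u.1⁻¹ ⟨k, Nat.lt_of_succ_lt hk1⟩ < u.1⁻¹ ⟨k + 1, hk1⟩ := by
    rw [permLen_iff h2 (adjSwap n k * (adjSwap n (k + 1) * u.1))]
    simp only [inv_adjSwap_mul, vt1, vt2, vt3, vs1, vs2, vs3]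
  -- Dmu claims from the master element
  have c1 : adjSwap n k * (adjSwap n (k + 1) * (adjSwap n k * u.1)) ∈ Dmu n r μ →
      adjSwap n k * u.1 ∈ Dmu n r μ := by
    intro hM
    refine mem_Dmu_step hk1 (adjSwap n k * adjSwap n (k + 1)) u.2 (by rw [mul_assoc]; exact hM) ?_
    simp only [Equiv.Perm.mul_apply, vt1, vt2, vs1, vs3]
    exact Fin.mk_lt_mk.mpr (by omega)
  have c2 : adjSwap n k * (adjSwap n (k + 1) * (adjSwap n k * u.1)) ∈ Dmu n r μ →
      adjSwap n k * u.1 ∈ Dmu n r μ →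
      adjSwap n (k + 1) * (adjSwap n k * u.1) ∈ Dmu n r μ := by
    intro hM hc1
    refine mem_Dmu_step h2 (adjSwap n k) hc1 hM ?_
    rw [vs2, vs3]
    exact Fin.mk_lt_mk.mpr (by omega)
  have c1' : adjSwap n k * (adjSwap n (k + 1) * (adjSwap n k * u.1)) ∈ Dmu n r μ →
      adjSwap n (k + 1) * u.1 ∈ Dmu n r μ := by
    intro hM
    refine mem_Dmu_step h2 (adjSwap n (k + 1) * adjSwap n k) u.2
      (by rw [mul_assoc, ← hbr]; exact hM) ?_
    simp only [Equiv.Perm.mul_apply, vs2, vs3, vt1, vt3]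
    exact Fin.mk_lt_mk.mpr (by omega)
  have c2' : adjSwap n k * (adjSwap n (k + 1) * (adjSwap n k * u.1)) ∈ Dmu n r μ →
      adjSwap n (k + 1) * u.1 ∈ Dmu n r μ →
      adjSwap n k * (adjSwap n (k + 1) * u.1) ∈ Dmu n r μ := by
    intro hM hc1
    refine mem_Dmu_step hk1 (adjSwap n (k + 1)) hc1 (by rw [← hbr]; exact hM) ?_
    rw [vt1, vt2]
    exact Fin.mk_lt_mk.mpr (by omega)
  by_cases hL : (permLen (adjSwap n k * u.1) = permLen u.1 + 1 ∧
      adjSwap n k * u.1 ∈ Dmu n r μ) ∧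
      (permLen (adjSwap n (k + 1) * (adjSwap n k * u.1)) =
          permLen (adjSwap n k * u.1) + 1 ∧
        adjSwap n (k + 1) * (adjSwap n k * u.1) ∈ Dmu n r μ) ∧
      (permLen (adjSwap n k * (adjSwap n (k + 1) * (adjSwap n k * u.1))) =
          permLen (adjSwap n (k + 1) * (adjSwap n k * u.1)) + 1 ∧
        adjSwap n k * (adjSwap n (k + 1) * (adjSwap n k * u.1)) ∈ Dmu n r μ)
  · have hM := hL.2.2.2
    have hab := LA1.1 hL.1.1
    have hac := LA2.1 hL.2.1.1
    have hbc := LA3.1 hL.2.2.1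
    have hR : (permLen (adjSwap n (k + 1) * u.1) = permLen u.1 + 1 ∧
        adjSwap n (k + 1) * u.1 ∈ Dmu n r μ) ∧
        (permLen (adjSwap n k * (adjSwap n (k + 1) * u.1)) =
            permLen (adjSwap n (k + 1) * u.1) + 1 ∧
          adjSwap n k * (adjSwap n (k + 1) * u.1) ∈ Dmu n r μ) ∧
        (permLen (adjSwap n (k + 1) * (adjSwap n k * (adjSwap n (k + 1) * u.1))) =
            permLen (adjSwap n k * (adjSwap n (k + 1) * u.1)) + 1 ∧
          adjSwap n (k + 1) * (adjSwap n k * (adjSwap n (k + 1) * u.1)) ∈ Dmu n r μ) :=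
      ⟨⟨LB1.2 hbc, c1' hM⟩, ⟨LB2.2 hac, c2' hM (c1' hM)⟩,
        ⟨LB3.2 hab, by rw [← hbr]; exact hM⟩⟩
    rw [dif_pos hL, dif_pos hR]
    have : (⟨adjSwap n k * (adjSwap n (k + 1) * (adjSwap n k * u.1)), hL.2.2.2⟩ :
        DmuSub n r μ) =
        ⟨adjSwap n (k + 1) * (adjSwap n k * (adjSwap n (k + 1) * u.1)), hR.2.2.2⟩ :=
      Subtype.ext hbr
    rw [this]
  · rw [dif_neg hL, dif_neg]
    rintro ⟨⟨hR1, -⟩, ⟨hR2, -⟩, ⟨hR3, hMR⟩⟩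
    have hM : adjSwap n k * (adjSwap n (k + 1) * (adjSwap n k * u.1)) ∈ Dmu n r μ := by
      rw [hbr]; exact hMR
    exact hL ⟨⟨LA1.2 (LB3.1 hR3), c1 hM⟩, ⟨LA2.2 (LB2.1 hR2), c2 hM (c1 hM)⟩,
      ⟨LA3.2 (LB1.1 hR1), hM⟩⟩

/-- the operators `U_k` satisfy the nilCoxeter relations
(so `V` realizes `Ind^{ni}_{μi} V(i^μ)` over the quiver Hecke algebra `R(ni)`
attached to an imaginary index `i`, as in Lemma 1.3 of the paper). -/
theorem stmt9 (K : Type*) [Field K] {n r : ℕ} (hn : 1 ≤ n) (μ : ℕ → ℕ)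
    (hpos : ∀ t < r, 1 ≤ μ t) (hsum : off μ r = n)
    (U : ℕ → ((DmuSub n r μ → K) →ₗ[K] (DmuSub n r μ → K)))
    (hU : IsUFamily K n r μ U) :
    (∀ k, k + 1 < n → (U k).comp (U k) = 0) ∧
    (∀ k, k + 2 < n →
      (U k).comp ((U (k + 1)).comp (U k)) = (U (k + 1)).comp ((U k).comp (U (k + 1)))) ∧
    (∀ k l, k + 1 < n → l + 1 < n → (k + 2 ≤ l ∨ l + 2 ≤ k) →
      (U k).comp (U l) = (U l).comp (U k)) := by
  
  refine ⟨fun k hk => nil_aux hU hk, fun k hk => braid_aux hU hk, fun k l hk hl hkl => ?_⟩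
  rcases hkl with h | h
  · exact comm_aux hU hk hl h
  · exact (comm_aux hU hl hk h).symm
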